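/- If (T,⊆) is a κ-Aronszajn tree with T ⊆ {}^{<κ}ω streamlined, then the lexicographically ordered set (T,<_lex) contains no suborder isomorphic to κ or to κ* (the reverse of κ). -/

import Mathlib

noncomputable section
open Cardinal Set

/-- A node of a streamlined tree: a partial function from ordinals to `ℕ`,
encoded as an `Option ℕ`-valued function; its domain is meant to be an ordinal. -/
abbrev ONode : Type 1 := Ordinal → Option ℕ

/-- `t` has domain exactly the ordinal `α`. -/
def nodeDom (t : ONode) (α : Ordinal) : Prop := ∀ γ, (t γ).isSome ↔ γ < α

/-- The restriction `t ↾ β`. -/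
def nrestrict (t : ONode) (β : Ordinal) : ONode := fun γ => if γ < β then t γ else none

/-- `nExt t s` says that `s` extends `t`, i.e. `t ⊆ s` as functions. -/
def nExt (t s : ONode) : Prop := ∀ γ, (t γ).isSome → s γ = t γ

/-- Incompatibility of two nodes in the tree order `⊆`. -/
def nIncomp (s t : ONode) : Prop := ¬ nExt s t ∧ ¬ nExt t s

/-- The `α`-th level of `T`. -/
def levelSet (T : Set ONode) (α : Ordinal) : Set ONode := {t ∈ T | nodeDom t α}

/-- `T ⊆ {}^{<κ}ω` is a streamlined `κ`-tree. -/
structure IsStreamTree (κ : Cardinal.{0}) (T : Set ONode) : Prop where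
  hdom : ∀ t ∈ T, ∃ α < κ.ord, nodeDom t α
  down : ∀ t ∈ T, ∀ β, nrestrict t β ∈ T
  level_ne : ∀ α < κ.ord, (levelSet T α).Nonempty
  level_small : ∀ α < κ.ord, Cardinal.mk ↥(levelSet T α) < Cardinal.lift.{1} κ

/-- The lexicographic (strict) order on nodes: `s <_lex t` iff `s ⊊ t`, or
`s(Δ) < t(Δ)` at the least point `Δ` of disagreement. -/
def lexLT (s t : ONode) : Prop :=
  (nExt s t ∧ s ≠ t) ∨
  ∃ Δ m n, (∀ γ < Δ, s γ = t γ) ∧ s Δ = some m ∧ t Δ = some n ∧ m < n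

/-- `T` has a chain (branch) of size `κ`. -/
def HasKappaBranch (κ : Cardinal.{0}) (T : Set ONode) : Prop :=
  ∃ B ⊆ T, (∀ s ∈ B, ∀ t ∈ B, nExt s t ∨ nExt t s) ∧
    Cardinal.lift.{1} κ ≤ Cardinal.mk ↥B

/-- A `ϱ`-modification: a finitely supported integer correction term, whose support
is a finite set of non-limit ordinals below `κ` containing `0`. -/
structure RhoMod (κ : Cardinal.{0}) where
  x : Finset Ordinal
  zero_mem : (0 : Ordinal) ∈ x
  mem_nacc : ∀ β ∈ x, β < κ.ord ∧ ¬ Order.IsSuccLimit β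
  f : Ordinal → ℤ

/-- `max (dom η ∩ (β+1))`: the largest point of the support of `η` that is `≤ β`. -/
def RhoMod.anchor {κ : Cardinal.{0}} (η : RhoMod κ) (β : Ordinal) : Ordinal :=
  (η.x.filter (· ≤ β)).max' ⟨0, Finset.mem_filter.2 ⟨η.zero_mem, by simp⟩⟩

/-- `η * τ` is everywhere defined (takes values in `ω`). -/
def rhoDefined {κ : Cardinal.{0}} (η : RhoMod κ) (t : ONode) : Prop :=
  ∀ γ n, t γ = some n → 0 ≤ η.f (η.anchor γ) + (n : ℤ)

/-- The action `η * t` of a `ϱ`-modification on a node. -/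
def rhoAct {κ : Cardinal.{0}} (η : RhoMod κ) (t : ONode) : ONode :=
  fun γ => (t γ).map fun n => (η.f (η.anchor γ) + (n : ℤ)).toNat

/-- `T` is `ϱ`-uniform: closed under all (defined) `ϱ`-modifications. -/
def RhoUniform (κ : Cardinal.{0}) (T : Set ONode) : Prop :=
  ∀ t ∈ T, ∀ η : RhoMod κ, rhoDefined η t → rhoAct η t ∈ T

/-- `T` is `ϱ`-coherent: any two nodes on a common level are `ϱ`-modifications of each other. -/
def RhoCoherent (κ : Cardinal.{0}) (T : Set ONode) : Prop :=
  ∀ α < κ.ord, ∀ s ∈ levelSet T α, ∀ t ∈ levelSet T α,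
    ∃ η : RhoMod κ, rhoDefined η t ∧ rhoAct η t = s

/-- The cone `T_{[s]}`. -/
def cone (T : Set ONode) (s : ONode) : Set ONode := {t ∈ T | nExt t s ∨ nExt s t}

/-- The frozen cone `T_{[s,i]}`. -/
def frozenCone (T : Set ONode) (s : ONode) (i : ℕ) : Set ONode :=
  {t ∈ T | nExt t s ∨ (nExt s t ∧ ∀ ξ n, ¬ (s ξ).isSome → t ξ = some n → i ≤ n)}

/-! ### Auxiliary machinery for `stmt18` -/

/-- A simple order on `Option ℕ` with `none` at the bottom. -/
def optLE : Option ℕ → Option ℕ → Prop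
  | none, _ => True
  | some _, none => False
  | some m, some n => m ≤ n

lemma optLE_antisymm : ∀ x y : Option ℕ, optLE x y → optLE y x → x = y := by
  rintro (_ | m) (_ | n) h1 h2
  · rfl
  · exact absurd h2 (by simp [optLE])
  · exact absurd h1 (by simp [optLE])
  · exact congrArg some (le_antisymm h1 h2)

lemma lexIrr (a : ONode) : ¬ lexLT a a := by
  rintro (⟨-, h⟩ | ⟨Δ, m, n, -, h1, h2, h3⟩)
  · exact h rfl
  · rw [h1] at h2
    injection h2 with h2
    omega

/-- Lemma A: a node lexicographically between `a` and `c` agrees with them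
wherever `a` and `c` agree on an initial segment. -/
lemma lexA (a b c : ONode) (δ : Ordinal) (h1 : lexLT a b) (h2 : lexLT b c)
    (hac : ∀ ξ, ξ < δ → a ξ = c ξ) : ∀ ξ, ξ < δ → b ξ = a ξ := by
  by_contra hcon
  push_neg at hcon
  have hSne : {ξ : Ordinal | ξ < δ ∧ b ξ ≠ a ξ}.Nonempty := by
    obtain ⟨ξ, h, h'⟩ := hcon; exact ⟨ξ, h, h'⟩
  have hmem := csInf_mem hSne
  have hmin : ∀ ζ, ζ < sInf {ξ : Ordinal | ξ < δ ∧ b ξ ≠ a ξ} → ¬(ζ < δ ∧ b ζ ≠ a ζ) :=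
    fun ζ hζ => notMem_of_lt_csInf' (s := {ξ : Ordinal | ξ < δ ∧ b ξ ≠ a ξ}) hζ
  obtain ⟨γ, hγmem, hγmin⟩ :
      ∃ γ, (γ < δ ∧ b γ ≠ a γ) ∧ ∀ ζ, ζ < γ → ¬(ζ < δ ∧ b ζ ≠ a ζ) :=
    ⟨_, hmem, hmin⟩
  have hlow : ∀ ζ, ζ < γ → b ζ = a ζ := by
    intro ζ hζ
    by_contra h
    exact hγmin ζ hζ ⟨hζ.trans hγmem.1, h⟩
  have hacγ : a γ = c γ := hac γ hγmem.1
  obtain ⟨hext, -⟩ | ⟨Δ₁, m₁, n₁, hag₁, ha₁, hb₁, hmn₁⟩ := h1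
  · -- `a ⊆ b`
    have haγ : a γ = none := by
      by_contra h
      exact hγmem.2 (hext γ (Option.ne_none_iff_isSome.mp h))
    have hcγ : c γ = none := by rw [← hacγ]; exact haγ
    have hbne : b γ ≠ none := fun h => hγmem.2 (h.trans haγ.symm)
    obtain ⟨k, hbγ⟩ := Option.ne_none_iff_exists'.mp hbne
    obtain ⟨hext₂, -⟩ | ⟨Δ₂, m₂, n₂, hag₂, hb₂, hc₂, hmn₂⟩ := h2
    · have := hext₂ γ (by simp [hbγ])
      rw [hcγ, hbγ] at this
      exact absurd this (by simp)
    · rcases lt_trichotomy Δ₂ γ with h | h | h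
      · have e : (some m₂ : Option ℕ) = some n₂ := by
          rw [← hb₂, ← hc₂, hlow _ h, hac _ (h.trans hγmem.1)]
        injection e with e; omega
      · subst h
        rw [hcγ] at hc₂
        exact absurd hc₂ (by simp)
      · have := hag₂ γ h
        rw [hbγ, hcγ] at this
        exact absurd this (by simp)
  · -- `a <ₗₑₓ b` via a disagreement point
    rcases lt_trichotomy Δ₁ γ with h | h | h
    · have e : (some m₁ : Option ℕ) = some n₁ := by rw [← ha₁, ← hb₁, hlow _ h]
      injection e with e; omega
    · subst h
      have hcγ : c Δ₁ = some m₁ := by rw [← hacγ]; exact ha₁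
      obtain ⟨hext₂, -⟩ | ⟨Δ₂, m₂, n₂, hag₂, hb₂, hc₂, hmn₂⟩ := h2
      · have := hext₂ Δ₁ (by simp [hb₁])
        rw [hcγ, hb₁] at this
        injection this with this; omega
      · rcases lt_trichotomy Δ₂ Δ₁ with h | h | h
        · have e : (some m₂ : Option ℕ) = some n₂ := by
            rw [← hb₂, ← hc₂, hlow _ h, hac _ (h.trans hγmem.1)]
          injection e with e; omega
        · subst h
          rw [hb₁] at hb₂
          rw [hcγ] at hc₂
          injection hb₂ with hb₂; injection hc₂ with hc₂; omega
        · have := hag₂ Δ₁ h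
          rw [hb₁, hcγ] at this
          injection this with this; omega
    · exact hγmem.2 (hag₁ γ h).symm

/-- Weak lexicographic monotonicity at the first possible disagreement point. -/
lemma lexR3 (a b : ONode) (α' β : Ordinal) (hb : nodeDom b α') (h : lexLT a b)
    (hag : ∀ ξ, ξ < β → a ξ = b ξ) : optLE (a β) (b β) := by
  cases ha : a β with
  | none => exact trivial
  | some p =>
    cases hbb : b β with
    | none =>
      exfalso
      have hα : ¬ β < α' := fun hlt => by
        have := (hb β).2 hlt
        rw [hbb] at this
        simp at this
      obtain ⟨hext, -⟩ | ⟨Δ, m, n, hagΔ, haΔ, hbΔ, hmn⟩ := h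
      · have := hext β (by simp [ha])
        rw [hbb, ha] at this
        exact absurd this (by simp)
      · have hΔ : Δ < α' := (hb Δ).1 (by simp [hbΔ])
        have hΔβ : Δ < β := lt_of_lt_of_le hΔ (le_of_not_gt hα)
        have e : (some m : Option ℕ) = some n := by rw [← haΔ, ← hbΔ, hag Δ hΔβ]
        injection e with e; omega
    | some q =>
      show p ≤ q
      by_contra hpq
      push_neg at hpq
      obtain ⟨hext, -⟩ | ⟨Δ, m, n, hagΔ, haΔ, hbΔ, hmn⟩ := h
      · have := hext β (by simp [ha])
        rw [hbb, ha] at this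
        injection this with this; omega
      · rcases lt_trichotomy Δ β with hlt | heq | hgt
        · have e : (some m : Option ℕ) = some n := by rw [← haΔ, ← hbΔ, hag Δ hlt]
          injection e with e; omega
        · subst heq
          rw [ha] at haΔ; rw [hbb] at hbΔ
          injection haΔ with haΔ; injection hbΔ with hbΔ; omega
        · have := hagΔ β hgt
          rw [ha, hbb] at this
          injection this with this; omega

/-- In a regular cardinal's ordinal, any coloring of the ordinals below `κ.ord`
with fewer than `κ` colors has an unbounded color class. -/
lemma unbFiber (κ : Cardinal.{0}) (hreg : κ.IsRegular) {ι : Type} (hι : #ι < κ)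
    (F : Ordinal → ι) : ∃ i, ∀ c < κ.ord, ∃ γ, c < γ ∧ γ < κ.ord ∧ F γ = i := by
  by_contra hcon
  push_neg at hcon
  choose g hg1 hg2 using hcon
  have hsup : iSup g < κ.ord :=
    Cardinal.iSup_lt_ord_of_isRegular hreg hι hg1
  have hlim : Order.IsSuccLimit κ.ord := Cardinal.isSuccLimit_ord hreg.aleph0_le
  have hγκ : iSup g + 1 < κ.ord := by
    rw [Ordinal.add_one_eq_succ]; exact hlim.succ_lt hsup
  have hgt : g (F (iSup g + 1)) < iSup g + 1 :=
    lt_of_le_of_lt (Ordinal.le_iSup g _)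
      (by rw [Ordinal.add_one_eq_succ]; exact Order.lt_succ _)
  exact hg2 (F (iSup g + 1)) _ hgt hγκ rfl

/-- The master lemma: an abstract strict "lexicographic-like" relation `R` admits
no `R`-increasing `κ.ord`-sequence through a `κ`-Aronszajn streamlined tree. -/
lemma masterLemma (κ : Cardinal.{0}) (hreg : κ.IsRegular) (hunc : Cardinal.aleph0 < κ)
    (T : Set ONode) (hT : IsStreamTree κ T) (hAron : ¬ HasKappaBranch κ T)
    (R : ONode → ONode → Prop) (le : Option ℕ → Option ℕ → Prop)
    (hR1 : ∀ a b c (δ : Ordinal), R a b → R b c → (∀ ξ, ξ < δ → a ξ = c ξ) →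
      ∀ ξ, ξ < δ → b ξ = a ξ)
    (hR2 : ∀ a, ¬ R a a)
    (hR3 : ∀ a b (α α' β : Ordinal), nodeDom a α → nodeDom b α' → R a b →
      (∀ ξ, ξ < β → a ξ = b ξ) → le (a β) (b β))
    (hanti : ∀ x y, le x y → le y x → x = y)
    (f : Ordinal → ONode) (hf : ∀ γ, γ < κ.ord → f γ ∈ T)
    (hmono : ∀ γ₁ γ₂, γ₁ < γ₂ → γ₂ < κ.ord → R (f γ₁) (f γ₂)) : False := by
  classical
  have hlim : Order.IsSuccLimit κ.ord := Cardinal.isSuccLimit_ord hreg.aleph0_le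
  have hsucc : ∀ x : Ordinal, x < x + 1 := fun x => by
    rw [Ordinal.add_one_eq_succ]; exact Order.lt_succ x
  -- domains of the nodes
  choose! α hα1 hα2 using hT.hdom
  -- distinctness
  have hne : ∀ γ δ, γ < δ → δ < κ.ord → f γ ≠ f δ := fun γ δ h hδ e =>
    hR2 (f δ) (e ▸ hmono γ δ h hδ)
  -- least disagreement points
  set Δf : Ordinal → Ordinal → Ordinal :=
    fun γ δ => sInf {ξ | f γ ξ ≠ f δ ξ} with hΔf
  have hdisne : ∀ γ δ, γ < δ → δ < κ.ord → {ξ : Ordinal | f γ ξ ≠ f δ ξ}.Nonempty := by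
    intro γ δ h hδ
    by_contra hc
    rw [Set.not_nonempty_iff_eq_empty, Set.eq_empty_iff_forall_notMem] at hc
    exact hne γ δ h hδ (funext fun ξ => not_not.mp (hc ξ))
  have hΔmem : ∀ γ δ, γ < δ → δ < κ.ord → f γ (Δf γ δ) ≠ f δ (Δf γ δ) :=
    fun γ δ h hδ => csInf_mem (hdisne γ δ h hδ)
  have hΔag : ∀ γ δ, γ < δ → δ < κ.ord → ∀ ξ, ξ < Δf γ δ → f γ ξ = f δ ξ := by
    intro γ δ h hδ ξ hξ
    by_contra hc
    exact notMem_of_lt_csInf' hξ hc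
  -- monotonicity of Δf in the first argument, antitonicity in the second
  have hΔmono : ∀ γ₁ γ₂ δ, γ₁ < γ₂ → γ₂ < δ → δ < κ.ord → Δf γ₁ δ ≤ Δf γ₂ δ := by
    intro γ₁ γ₂ δ h12 h2δ hδ
    by_contra h
    push_neg at h
    have hb : ∀ ξ, ξ < Δf γ₁ δ → f γ₂ ξ = f γ₁ ξ :=
      hR1 (f γ₁) (f γ₂) (f δ) _ (hmono _ _ h12 (h2δ.trans hδ)) (hmono _ _ h2δ hδ)
        (hΔag γ₁ δ (h12.trans h2δ) hδ)
    exact hΔmem γ₂ δ h2δ hδ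
      ((hb _ h).trans (hΔag γ₁ δ (h12.trans h2δ) hδ _ h))
  have hΔanti : ∀ γ δ₁ δ₂, γ < δ₁ → δ₁ < δ₂ → δ₂ < κ.ord → Δf γ δ₂ ≤ Δf γ δ₁ := by
    intro γ δ₁ δ₂ h1 h2 hδ
    by_contra h
    push_neg at h
    have hb : ∀ ξ, ξ < Δf γ δ₂ → f δ₁ ξ = f γ ξ :=
      hR1 (f γ) (f δ₁) (f δ₂) _ (hmono _ _ h1 ((h2.trans hδ))) (hmono _ _ h2 hδ)
        (hΔag γ δ₂ (h1.trans h2) hδ)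
    exact hΔmem γ δ₁ h1 (h2.trans hδ) (hb _ h).symm
  -- the eventual value `D γ` of `δ ↦ Δf γ δ`
  set D : Ordinal → Ordinal :=
    fun γ => sInf {β | ∃ δ, γ < δ ∧ δ < κ.ord ∧ Δf γ δ = β} with hD
  have hDmem : ∀ γ, γ < κ.ord → ∃ δ, γ < δ ∧ δ < κ.ord ∧ Δf γ δ = D γ := by
    intro γ hγ
    have hne' : Set.Nonempty {β : Ordinal | ∃ δ, γ < δ ∧ δ < κ.ord ∧ Δf γ δ = β} :=
      ⟨Δf γ (γ + 1), γ + 1, hsucc γ,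
        by rw [Ordinal.add_one_eq_succ]; exact hlim.succ_lt hγ, rfl⟩
    exact csInf_mem hne'
  choose! δs hδs1 hδs2 hδs3 using hDmem
  have hDle : ∀ γ δ, γ < δ → δ < κ.ord → D γ ≤ Δf γ δ :=
    fun γ δ h hδ => csInf_le' ⟨δ, h, hδ, rfl⟩
  have hDeq : ∀ γ δ, γ < κ.ord → δs γ ≤ δ → γ < δ → δ < κ.ord → Δf γ δ = D γ := by
    intro γ δ hγ hsd hγδ hδ
    rcases eq_or_lt_of_le hsd with h | hlt
    · rw [← h]; exact hδs3 γ hγ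
    · exact le_antisymm ((hΔanti γ (δs γ) δ (hδs1 γ hγ) hlt hδ).trans_eq (hδs3 γ hγ))
        (hDle γ δ hγδ hδ)
  -- a common witness for pairs
  have hpick : ∀ γ₁ γ₂, γ₁ < γ₂ → γ₂ < κ.ord →
      ∃ δ, δ < κ.ord ∧ γ₂ < δ ∧ Δf γ₁ δ = D γ₁ ∧ Δf γ₂ δ = D γ₂ := by
    intro γ₁ γ₂ h12 h2
    have h1κ : γ₁ < κ.ord := h12.trans h2
    refine ⟨max (δs γ₁) (max (δs γ₂) γ₂) + 1, ?_, ?_, ?_, ?_⟩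
    · rw [Ordinal.add_one_eq_succ]
      exact hlim.succ_lt (max_lt (hδs2 γ₁ h1κ) (max_lt (hδs2 γ₂ h2) h2))
    · exact lt_of_le_of_lt ((le_max_right _ _).trans (le_max_right _ _)) (hsucc _)
    · exact hDeq γ₁ _ h1κ ((le_max_left _ _).trans (hsucc _).le)
        (h12.trans (lt_of_le_of_lt ((le_max_right _ _).trans (le_max_right _ _)) (hsucc _)))
        (by rw [Ordinal.add_one_eq_succ]
            exact hlim.succ_lt (max_lt (hδs2 γ₁ h1κ) (max_lt (hδs2 γ₂ h2) h2)))
    · exact hDeq γ₂ _ h2 (((le_max_left _ _).trans (le_max_right _ _)).trans (hsucc _).le)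
        (lt_of_le_of_lt ((le_max_right _ _).trans (le_max_right _ _)) (hsucc _))
        (by rw [Ordinal.add_one_eq_succ]
            exact hlim.succ_lt (max_lt (hδs2 γ₁ h1κ) (max_lt (hδs2 γ₂ h2) h2)))
  have hDmono : ∀ γ₁ γ₂, γ₁ < γ₂ → γ₂ < κ.ord → D γ₁ ≤ D γ₂ := by
    intro γ₁ γ₂ h12 h2
    obtain ⟨δ, hδκ, h2δ, e1, e2⟩ := hpick γ₁ γ₂ h12 h2
    calc D γ₁ = Δf γ₁ δ := e1.symm
      _ ≤ Δf γ₂ δ := hΔmono γ₁ γ₂ δ h12 h2δ hδκ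
      _ = D γ₂ := e2
  have hAg : ∀ γ₁ γ₂, γ₁ < γ₂ → γ₂ < κ.ord → ∀ ξ, ξ < D γ₁ → f γ₂ ξ = f γ₁ ξ := by
    intro γ₁ γ₂ h12 h2
    obtain ⟨δ, hδκ, h2δ, e1, e2⟩ := hpick γ₁ γ₂ h12 h2
    exact hR1 (f γ₁) (f γ₂) (f δ) (D γ₁) (hmono _ _ h12 h2) (hmono _ _ h2δ hδκ)
      (fun ξ hξ => hΔag γ₁ δ (h12.trans h2δ) hδκ ξ (e1 ▸ hξ))
  -- nodes are defined below `D γ`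
  have hSome : ∀ γ, γ < κ.ord → ∀ ξ, ξ < D γ → (f γ ξ).isSome := by
    intro γ hγ ξ hξ
    by_contra h
    have hnone : f γ ξ = none := Option.not_isSome_iff_eq_none.mp h
    have hγδ := hδs1 γ hγ
    have hδκ := hδs2 γ hγ
    have hΔD := hδs3 γ hγ
    have hξΔ : ξ < Δf γ (δs γ) := hΔD ▸ hξ
    have h2 : f (δs γ) ξ = none := (hΔag γ (δs γ) hγδ hδκ ξ hξΔ).symm.trans hnone
    have hd1 : ¬ ξ < α (f γ) := fun hc => by
      have := (hα2 (f γ) (hf γ hγ) ξ).2 hc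
      rw [hnone] at this; simp at this
    have hd2 : ¬ ξ < α (f (δs γ)) := fun hc => by
      have := (hα2 (f (δs γ)) (hf _ hδκ) ξ).2 hc
      rw [h2] at this; simp at this
    have e1 : f γ (Δf γ (δs γ)) = none := by
      rw [← Option.not_isSome_iff_eq_none]
      intro hs
      exact hd1 (hξΔ.trans ((hα2 (f γ) (hf γ hγ) _).1 hs))
    have e2 : f (δs γ) (Δf γ (δs γ)) = none := by
      rw [← Option.not_isSome_iff_eq_none]
      intro hs
      exact hd2 (hξΔ.trans ((hα2 (f (δs γ)) (hf _ hδκ) _).1 hs))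
    exact hΔmem γ (δs γ) hγδ hδκ (e1.trans e2.symm)
  -- the candidate branch
  set m : Ordinal → ONode := fun γ => nrestrict (f γ) (D γ) with hm
  have hmT : ∀ γ, γ < κ.ord → m γ ∈ T := fun γ hγ => hT.down _ (hf γ hγ) _
  have hmval : ∀ γ ξ, ξ < D γ → m γ ξ = f γ ξ := fun γ ξ h => if_pos h
  have hmnone : ∀ γ ξ, ¬ ξ < D γ → m γ ξ = none := fun γ ξ h => if_neg h
  have hmExt : ∀ γ₁ γ₂, γ₁ < γ₂ → γ₂ < κ.ord → nExt (m γ₁) (m γ₂) := by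
    intro γ₁ γ₂ h12 h2 ξ hs
    have hξ : ξ < D γ₁ := by
      by_contra h
      rw [hmnone _ _ h] at hs
      simp at hs
    have hξ2 : ξ < D γ₂ := hξ.trans_le (hDmono _ _ h12 h2)
    rw [hmval _ _ hξ2, hmval _ _ hξ, hAg γ₁ γ₂ h12 h2 ξ hξ]
  have hmD : ∀ γ₁ γ₂, γ₁ < γ₂ → γ₂ < κ.ord → m γ₁ = m γ₂ → D γ₁ = D γ₂ := by
    intro γ₁ γ₂ h12 h2 he
    by_contra hne'
    have hlt' : D γ₁ < D γ₂ := lt_of_le_of_ne (hDmono _ _ h12 h2) hne'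
    have e1 : m γ₁ (D γ₁) = none := hmnone _ _ (lt_irrefl _)
    have e2 : (m γ₂ (D γ₁)).isSome := by
      rw [hmval _ _ hlt']
      exact hSome γ₂ h2 _ hlt'
    rw [← he, e1] at e2
    simp at e2
  -- the branch is too small, so `D` stabilizes via an unbounded color class
  set B : Set ONode := {t | ∃ γ, γ < κ.ord ∧ m γ = t} with hB
  have hBsub : B ⊆ T := by
    rintro t ⟨γ, hγ, rfl⟩
    exact hmT γ hγ
  have hBchain : ∀ s ∈ B, ∀ t ∈ B, nExt s t ∨ nExt t s := by
    rintro s ⟨γ₁, h1, rfl⟩ t ⟨γ₂, h2, rfl⟩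
    rcases lt_trichotomy γ₁ γ₂ with h | h | h
    · exact Or.inl (hmExt _ _ h h2)
    · exact Or.inl (by rw [h]; intro ξ _; rfl)
    · exact Or.inr (hmExt _ _ h h1)
  have hBcard : Cardinal.mk ↥B < Cardinal.lift.{1} κ := by
    by_contra hcon
    exact hAron ⟨B, hBsub, hBchain, le_of_not_gt hcon⟩
  obtain ⟨μ, hμκ, hμ⟩ := Cardinal.lt_lift_iff.mp hBcard
  have hB0 : m 0 ∈ B := ⟨0, hlim.pos, rfl⟩
  obtain ⟨e⟩ : Nonempty (↥B ≃ Quotient.out μ) := by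
    apply Cardinal.lift_mk_eq'.mp
    rw [Cardinal.lift_uzero, Cardinal.mk_out, hμ]
  set F : Ordinal → Quotient.out μ :=
    fun γ => if h : γ < κ.ord then e ⟨m γ, ⟨γ, h, rfl⟩⟩ else e ⟨m 0, hB0⟩ with hF
  have hμcard : #(Quotient.out μ) < κ := by rwa [Cardinal.mk_out]
  obtain ⟨i, hi⟩ := unbFiber κ hreg hμcard F
  obtain ⟨γ₀, hγ₀pos, hγ₀κ, hγ₀F⟩ := hi 0 hlim.pos
  have hfib : ∀ γ', γ' < κ.ord → F γ' = i → γ₀ < γ' → D γ' = D γ₀ := by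
    intro γ' hκ' hF' hlt
    have heq : F γ' = F γ₀ := hF'.trans hγ₀F.symm
    rw [hF] at heq
    simp only [dif_pos hκ', dif_pos hγ₀κ] at heq
    have := e.injective heq
    have hmm : m γ' = m γ₀ := congrArg Subtype.val this
    exact (hmD γ₀ γ' hlt hκ' hmm.symm).symm
  have hconst : ∀ γ, γ₀ ≤ γ → γ < κ.ord → D γ = D γ₀ := by
    intro γ hγ₀γ hγκ
    rcases eq_or_lt_of_le hγ₀γ with h | hlt
    · rw [← h]
    · obtain ⟨γ', hγγ', hγ'κ, hF'⟩ := hi γ hγκ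
      refine le_antisymm ?_ (hDmono γ₀ γ hlt hγκ)
      calc D γ ≤ D γ' := hDmono _ _ hγγ' hγ'κ
        _ = D γ₀ := hfib γ' hγ'κ hF' (hlt.trans hγγ')
  -- the value argument at the stabilized level
  set β := D γ₀ with hβ
  set v : Ordinal → Option ℕ := fun γ => f γ β with hv
  have hvle : ∀ γ₁ γ₂, γ₀ ≤ γ₁ → γ₁ < γ₂ → γ₂ < κ.ord → le (v γ₁) (v γ₂) := by
    intro γ₁ γ₂ h0 h12 h2
    have h1κ : γ₁ < κ.ord := h12.trans h2
    refine hR3 (f γ₁) (f γ₂) (α (f γ₁)) (α (f γ₂)) β (hα2 _ (hf _ h1κ))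
      (hα2 _ (hf _ h2)) (hmono _ _ h12 h2) ?_
    intro ξ hξ
    have hξ' : ξ < D γ₁ := by rw [hconst γ₁ h0 h1κ]; exact hξ
    exact (hAg γ₁ γ₂ h12 h2 ξ hξ').symm
  have hvne : ∀ γ, γ₀ ≤ γ → γ < κ.ord → ∃ δ, γ < δ ∧ δ < κ.ord ∧ v γ ≠ v δ := by
    intro γ h0 hγκ
    refine ⟨δs γ, hδs1 γ hγκ, hδs2 γ hγκ, ?_⟩
    have hΔβ : Δf γ (δs γ) = β := (hδs3 γ hγκ).trans (hconst γ h0 hγκ)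
    have := hΔmem γ (δs γ) (hδs1 γ hγκ) (hδs2 γ hγκ)
    rwa [hΔβ] at this
  have hoptκ : #(Option ℕ) < κ := by
    rw [Cardinal.mk_denumerable]
    exact hunc
  obtain ⟨c, hc⟩ := unbFiber κ hreg hoptκ v
  obtain ⟨γ₁, hγ₀γ₁, hγ₁κ, hvγ₁⟩ := hc γ₀ hγ₀κ
  obtain ⟨δ, hγ₁δ, hδκ, hvneq⟩ := hvne γ₁ hγ₀γ₁.le hγ₁κ
  obtain ⟨γ₂, hδγ₂, hγ₂κ, hvγ₂⟩ := hc δ hδκ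
  have l1 : le (v γ₁) (v δ) := hvle γ₁ δ hγ₀γ₁.le hγ₁δ hδκ
  have l2 : le (v δ) (v γ₂) := hvle δ γ₂ (hγ₀γ₁.le.trans hγ₁δ.le) hδγ₂ hγ₂κ
  rw [hvγ₂, ← hvγ₁] at l2
  exact hvneq (hanti _ _ l1 l2)

/-- The lexicographic ordering of a streamlined `κ`-Aronszajn tree contains no suborder
isomorphic to `κ` nor to `κ*`. -/
theorem stmt18 (κ : Cardinal.{0}) (hreg : κ.IsRegular) (hunc : Cardinal.aleph0 < κ)
    (T : Set ONode) (hT : IsStreamTree κ T) (hAron : ¬ HasKappaBranch κ T) :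
    (¬ ∃ f : Ordinal → ONode, (∀ γ < κ.ord, f γ ∈ T) ∧
      ∀ γ₁ γ₂, γ₁ < γ₂ → γ₂ < κ.ord → lexLT (f γ₁) (f γ₂)) ∧
    (¬ ∃ f : Ordinal → ONode, (∀ γ < κ.ord, f γ ∈ T) ∧
      ∀ γ₁ γ₂, γ₁ < γ₂ → γ₂ < κ.ord → lexLT (f γ₂) (f γ₁)) := by
  constructor
  · rintro ⟨f, hf, hmono⟩
    exact masterLemma κ hreg hunc T hT hAron lexLT optLE
      (fun a b c δ h1 h2 hac => lexA a b c δ h1 h2 hac)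
      lexIrr
      (fun a b α α' β hda hdb h hag => lexR3 a b α' β hdb h hag)
      optLE_antisymm f (fun γ hγ => hf γ hγ) hmono
  · rintro ⟨f, hf, hmono⟩
    refine masterLemma κ hreg hunc T hT hAron (fun s t => lexLT t s)
      (fun x y => optLE y x) ?_ (fun a h => lexIrr a h)
      (fun a b α α' β hda hdb h hag => lexR3 b a α β hda h
        (fun ξ hξ => (hag ξ hξ).symm))
      (fun x y h1 h2 => (optLE_antisymm y x h1 h2).symm)
      f (fun γ hγ => hf γ hγ) hmono
    intro a b c δ h1 h2 hac ξ hξ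
    have hb := lexA c b a δ h2 h1 (fun ζ hζ => (hac ζ hζ).symm) ξ hξ
    rw [hb, hac ξ hξ]
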